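/- Let R be a commutative reduced Noetherian ring and I an ideal of R containing a nonzerodivisor f. Then for every φ ∈ Hom_R(I,I), the element φ(f)/f of the total quotient ring of R is integral over R. -/

import Mathlib

/-- Determinant trick with a unit witness instead of `NoZeroSMulDivisors`. -/
theorem aux_isIntegral_of_smul_mem {R A : Type*} [CommRing R] [CommRing A] [Algebra R A]
    (N : Submodule R A) (hN' : N.FG) (x : A) (hx : ∀ n ∈ N, x * n ∈ N)
    (u : A) (hu : u ∈ N) (hunit : IsUnit u) : IsIntegral R x := by
  let A' : Subalgebra R A :=
    { carrier := { x | ∀ n ∈ N, x * n ∈ N }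
      mul_mem' := fun {a b} ha hb n hn => (mul_assoc a b n) ▸ ha _ (hb _ hn)
      one_mem' := fun n hn => (one_mul n).symm ▸ hn
      add_mem' := fun {a b} ha hb n hn => (add_mul a b n).symm ▸ N.add_mem (ha _ hn) (hb _ hn)
      zero_mem' := fun n _hn => (zero_mul n).symm ▸ N.zero_mem
      algebraMap_mem' := fun r n hn => by
        simpa [Algebra.smul_def] using N.smul_mem r hn }
  have hxA : x ∈ A' := hx
  let g : A' →ₐ[R] Module.End R N :=
    AlgHom.ofLinearMap
      { toFun := fun x => (LinearMap.mulLeft R (x : A)).restrict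
          (fun n hn => x.prop n hn)
        map_add' := by intros x y; ext; exact add_mul _ _ _
        map_smul' := by
          intros r s; ext n
          exact smul_mul_assoc r (s : A) (n : A) }
      (by ext; apply one_mul)
      (by intros x y; ext; apply mul_assoc)
  have hinj : Function.Injective g := by
    show Function.Injective g.toLinearMap
    refine (LinearMap.ker_eq_bot (R := R) (R₂ := R) (M := A') (M₂ := Module.End R N) (f := g.toLinearMap)).mp ?_
    rw [eq_bot_iff]
    intro s hs
    have : s.1 * u = 0 := congr_arg Subtype.val (LinearMap.congr_fun hs ⟨u, hu⟩)
    exact Subtype.ext ((hunit.mul_right_eq_zero).mp (by rwa [mul_comm] at this))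
  show IsIntegral R (A'.val ⟨x, hxA⟩)
  rw [isIntegral_algHom_iff A'.val Subtype.val_injective, ← isIntegral_algHom_iff (B := Module.End R N) g hinj]
  haveI : Module.Finite R N := by rwa [Module.finite_def, Submodule.fg_top]
  apply Algebra.IsIntegral.isIntegral

/-- For `φ ∈ Hom_R(I,I)` and a nonzerodivisor `f ∈ I`, the element `φ(f)/f` of the
total quotient ring is integral over `R`. -/
theorem stmt_1 (R : Type*) [CommRing R] [IsNoetherianRing R] [IsReduced R]
    (I : Ideal R) (f : R) (hfI : f ∈ I) (hf : f ∈ nonZeroDivisors R)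
    (φ : Module.End R I) (h : FractionRing R)
    (hh : h * algebraMap R (FractionRing R) f
        = algebraMap R (FractionRing R) ((φ ⟨f, hfI⟩ : I) : R)) :
    IsIntegral R h := by
  let K := FractionRing R
  let ι := algebraMap R K
  have hfu : IsUnit (ι f) := IsLocalization.map_units K ⟨f, hf⟩
  -- the image of I in K
  let N : Submodule R K := Submodule.map (Algebra.linearMap R K) I
  have hNfg : N.FG := (IsNoetherian.noetherian I).map _
  have hstab : ∀ n ∈ N, h * n ∈ N := by
    rintro _ ⟨a, haI, rfl⟩
    refine ⟨(φ ⟨a, haI⟩ : I), (φ ⟨a, haI⟩).2, ?_⟩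
    -- show ι (φ a) = h * ι a, by multiplying by the unit ι f
    have key' : f * ((φ ⟨a, haI⟩ : I) : R) = a * ((φ ⟨f, hfI⟩ : I) : R) := by
      have h3 : f • (⟨a, haI⟩ : I) = a • (⟨f, hfI⟩ : I) := Subtype.ext (mul_comm f a)
      have h4 : f • φ ⟨a, haI⟩ = a • φ ⟨f, hfI⟩ := by
        rw [← map_smul, ← map_smul, h3]
      simpa [Subtype.ext_iff, smul_eq_mul] using h4
    apply hfu.mul_right_cancel
    show ι ((φ ⟨a, haI⟩ : I) : R) * ι f = (h * ι a) * ι f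
    rw [mul_assoc, mul_comm (ι a) (ι f), ← mul_assoc, hh, ← map_mul, ← map_mul,
      mul_comm ((φ ⟨f, hfI⟩ : I) : R) a, ← key', mul_comm]
  have hfN : ι f ∈ N := ⟨f, hfI, rfl⟩
  exact aux_isIntegral_of_smul_mem N hNfg h hstab (ι f) hfN hfu
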